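/- For every simple graph G on n vertices, the sum over all edges (u,v) of 1/min(deg(u), deg(v)) is at most n − 1. -/

import Mathlib

open Finset

/-- `minDeg G e` is the minimum of the degrees of the two endpoints of the edge `e`. -/
noncomputable def minDeg {V : Type*} [Fintype V] [DecidableEq V]
    (G : SimpleGraph V) [DecidableRel G.Adj] (e : Sym2 V) : ℕ :=
  Sym2.lift ⟨fun u v => min (G.degree u) (G.degree v), fun u v => min_comm _ _⟩ e

section Aux
variable {V : Type*} [Fintype V] [DecidableEq V] (G : SimpleGraph V) [DecidableRel G.Adj]

noncomputable def gkey (v : V) : ℕ :=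
  G.degree v * Fintype.card V + ((Fintype.equivFin V) v : ℕ)

lemma gkey_inj : Function.Injective (gkey G) := by
  intro u v h
  unfold gkey at h
  have hu : ((Fintype.equivFin V) u : ℕ) < Fintype.card V := ((Fintype.equivFin V) u).isLt
  have hv : ((Fintype.equivFin V) v : ℕ) < Fintype.card V := ((Fintype.equivFin V) v).isLt
  have hd : G.degree u = G.degree v := by
    rcases lt_trichotomy (G.degree u) (G.degree v) with h'|h'|h'
    · nlinarith
    · exact h'
    · nlinarith
  rw [hd] at h
  have hi : ((Fintype.equivFin V) u : ℕ) = ((Fintype.equivFin V) v : ℕ) := by omega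
  exact (Fintype.equivFin V).injective (Fin.ext hi)

lemma gkey_le_deg {u v : V} (h : gkey G u ≤ gkey G v) : G.degree u ≤ G.degree v := by
  by_contra h'
  push_neg at h'
  unfold gkey at h
  have hv : ((Fintype.equivFin V) v : ℕ) < Fintype.card V := ((Fintype.equivFin V) v).isLt
  nlinarith

noncomputable def pick (e : Sym2 V) : V :=
  Sym2.lift ⟨fun u v => if gkey G u ≤ gkey G v then u else v, by
    intro u v
    dsimp only
    by_cases h1 : gkey G u ≤ gkey G v <;> by_cases h2 : gkey G v ≤ gkey G u <;>
      simp [h1, h2]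
    · exact gkey_inj G (le_antisymm h1 h2)
    · omega⟩ e

lemma pick_mem (e : Sym2 V) : pick G e ∈ e := by
  induction e using Sym2.ind with
  | _ u v =>
    simp only [pick, Sym2.lift_mk, Sym2.mem_iff]
    split <;> simp

lemma minDeg_eq_pick (e : Sym2 V) : minDeg G e = G.degree (pick G e) := by
  induction e using Sym2.ind with
  | _ u v =>
    simp only [pick, minDeg, Sym2.lift_mk]
    have key : ∀ (w x : V) (i : Fintype (G.neighborSet w)), w = x →
        @SimpleGraph.degree V G w i = G.degree x := by
      rintro w x i rfl
      exact congrArg (@SimpleGraph.degree V G w) (Subsingleton.elim _ _)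
    by_cases h : gkey G u ≤ gkey G v
    · exact (min_eq_left (gkey_le_deg G h)).trans (key _ _ _ (if_pos h)).symm
    · exact (min_eq_right (gkey_le_deg G (le_of_not_ge h))).trans (key _ _ _ (if_neg h)).symm



lemma pick_ne_max {vm : V} (hvm : ∀ w, gkey G w ≤ gkey G vm) {e : Sym2 V}
    (he : e ∈ G.edgeFinset) : pick G e ≠ vm := by
  induction e using Sym2.ind with
  | _ u v =>
    have hadj : G.Adj u v := by simpa [SimpleGraph.mem_edgeFinset] using he
    have hne : u ≠ v := hadj.ne
    simp only [pick, Sym2.lift_mk]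
    by_cases h : gkey G u ≤ gkey G v
    · rw [if_pos h]
      rintro rfl
      exact hne (gkey_inj G (le_antisymm h (hvm v)))
    · rw [if_neg h]
      rintro rfl
      exact h (hvm u)

lemma card_filter_pick_le (v : V) :
    ((G.edgeFinset.filter (fun e => pick G e = v)).card) ≤ G.degree v := by
  rw [← SimpleGraph.card_neighborFinset_eq_degree]
  apply Finset.card_le_card_of_injOn (fun e => if h : v ∈ e then Sym2.Mem.other' h else v)
  · intro e he
    simp only [Finset.coe_filter, Set.mem_setOf_eq] at he
    have hv : v ∈ e := he.2 ▸ pick_mem G e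
    simp only [Finset.mem_coe, dif_pos hv]
    have hspec := Sym2.other_spec' hv
    rw [SimpleGraph.mem_neighborFinset, ← SimpleGraph.mem_edgeSet, hspec]
    exact (SimpleGraph.mem_edgeFinset).1 he.1
  · intro e1 h1 e2 h2 heq
    simp only [Finset.coe_filter, Set.mem_setOf_eq] at h1 h2
    have hv1 : v ∈ e1 := h1.2 ▸ pick_mem G e1
    have hv2 : v ∈ e2 := h2.2 ▸ pick_mem G e2
    simp only at heq
    rw [dif_pos hv1, dif_pos hv2] at heq
    rw [← Sym2.other_spec' hv1, ← Sym2.other_spec' hv2, heq]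

end Aux

/-- For every simple graph on `n ≥ 1` vertices, the sum over all edges `(u,v)` of
`1 / min(deg u, deg v)` is at most `n - 1`. -/
theorem sum_inv_min_degree_le {V : Type*} [Fintype V] [DecidableEq V] [Nonempty V]
    (G : SimpleGraph V) [DecidableRel G.Adj] (n : ℕ) (hn : n = Fintype.card V) :
    ∑ e ∈ G.edgeFinset, (1 : ℝ) / (minDeg G e : ℝ) ≤ (n : ℝ) - 1 := by
  obtain ⟨vm, -, hvm⟩ := Finset.exists_max_image Finset.univ (gkey G) Finset.univ_nonempty
  have hvm' : ∀ w, gkey G w ≤ gkey G vm := fun w => hvm w (Finset.mem_univ w)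
  have hfib : ∑ e ∈ G.edgeFinset, (1 : ℝ) / (minDeg G e : ℝ)
      = ∑ v ∈ Finset.univ, ∑ e ∈ G.edgeFinset.filter (fun e => pick G e = v),
          (1 : ℝ) / (minDeg G e : ℝ) :=
    (Finset.sum_fiberwise_of_maps_to (fun e _ => Finset.mem_univ _) _).symm
  rw [hfib]
  -- the inner sum for each vertex
  have hinner : ∀ v : V, ∑ e ∈ G.edgeFinset.filter (fun e => pick G e = v),
      (1 : ℝ) / (minDeg G e : ℝ)
      = ((G.edgeFinset.filter (fun e => pick G e = v)).card : ℝ) * (1 / (G.degree v : ℝ)) := by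
    intro v
    rw [Finset.sum_congr rfl (fun e he => ?_), Finset.sum_const, nsmul_eq_mul]
    simp only [Finset.mem_filter] at he
    rw [minDeg_eq_pick, he.2]
  have hle1 : ∀ v : V, ∑ e ∈ G.edgeFinset.filter (fun e => pick G e = v),
      (1 : ℝ) / (minDeg G e : ℝ) ≤ 1 := by
    intro v
    rw [hinner v]
    rcases Nat.eq_zero_or_pos (G.degree v) with h0 | hpos
    · have : (G.edgeFinset.filter (fun e => pick G e = v)).card = 0 := by
        have := card_filter_pick_le G v; omega
      simp [this]
    · rw [mul_one_div, div_le_one (by exact_mod_cast hpos)]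
      exact_mod_cast card_filter_pick_le G v
  have hzero : ∑ e ∈ G.edgeFinset.filter (fun e => pick G e = vm),
      (1 : ℝ) / (minDeg G e : ℝ) = 0 := by
    apply Finset.sum_eq_zero_iff_of_nonneg (fun e _ => by positivity) |>.2
    intro e he
    simp only [Finset.mem_filter] at he
    exact absurd he.2 (pick_ne_max G hvm' he.1)
  rw [← Finset.sum_erase (f := fun v => ∑ e ∈ G.edgeFinset.filter (fun e => pick G e = v),
      (1 : ℝ) / (minDeg G e : ℝ)) Finset.univ hzero]
  calc ∑ v ∈ Finset.univ.erase vm, ∑ e ∈ G.edgeFinset.filter (fun e => pick G e = v),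
          (1 : ℝ) / (minDeg G e : ℝ)
      ≤ ∑ _v ∈ Finset.univ.erase vm, (1 : ℝ) :=
        Finset.sum_le_sum (fun v _ => hle1 v)
    _ = ((Finset.univ.erase vm).card : ℝ) := by rw [Finset.sum_const, nsmul_eq_mul, mul_one]
    _ ≤ (n : ℝ) - 1 := by
        rw [Finset.card_erase_of_mem (Finset.mem_univ vm), Finset.card_univ]
        have h1 : 1 ≤ Fintype.card V := Fintype.card_pos
        rw [hn]
        push_cast [Nat.cast_sub h1]
        simp
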